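/- Let n ≥ 1 be an integer, let l₀, l₁, …, lₙ be nonnegative integers with L := l₀ + l₁ + ⋯ + lₙ = n, and let y₁, …, yₙ be admissible real numbers. Then Φₙ(l₀,…,lₙ; y₁,…,yₙ) = 1. -/

import Mathlib

/-- `S y a b = y_a + y_{a+1} + ⋯ + y_b`. -/
noncomputable def S (y : ℕ → ℝ) (a b : ℕ) : ℝ := ∑ t ∈ Finset.Icc a b, y t

/-- `(y₁, …, yₙ)` is admissible if `S(a,b) ≠ 0` for all `1 ≤ a ≤ b ≤ n`. -/
def Admissible (n : ℕ) (y : ℕ → ℝ) : Prop :=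
  ∀ a b : ℕ, 1 ≤ a → a ≤ b → b ≤ n → S y a b ≠ 0

/-- `Φₙ(l₀,…,lₙ; y₁,…,yₙ)`, the pointwise ε→0 value of the distributional sum of
Lemma 1 of the paper. -/
noncomputable def Phi (n : ℕ) (l : ℕ → ℕ) (y : ℕ → ℝ) : ℝ :=
  ∑ m ∈ Finset.range (n + 1),
    (-1 : ℝ) ^ m *
      (∏ r ∈ Finset.range m, (-S y (r + 1) m) ^ l r / S y (r + 1) m) *
      (if l m = 0 then 1 else 0) *
      (∏ r ∈ Finset.Icc (m + 1) n, (S y (m + 1) r) ^ l r / S y (m + 1) r)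

open Polynomial Finset

lemma leadingCoeff_basisDivisor (x y : ℝ) :
    (Lagrange.basisDivisor x y).leadingCoeff = (x - y)⁻¹ := by
  rcases eq_or_ne x y with h | h
  · simp [h, Lagrange.basisDivisor_self]
  · rw [Lagrange.basisDivisor, leadingCoeff_mul, leadingCoeff_C,
      (monic_X_sub_C y).leadingCoeff, mul_one]

lemma coeff_lagrange_basis (s : Finset ℕ) (v : ℕ → ℝ) (hvs : Set.InjOn v s) {i : ℕ}
    (hi : i ∈ s) :
    (Lagrange.basis s v i).coeff (s.card - 1) = ∏ j ∈ s.erase i, (v i - v j)⁻¹ := by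
  rw [← Lagrange.natDegree_basis hvs hi, coeff_natDegree, Lagrange.basis, leadingCoeff_prod]
  exact prod_congr rfl fun j _ => leadingCoeff_basisDivisor _ _

lemma divided_diff (s : Finset ℕ) (v : ℕ → ℝ) (hvs : Set.InjOn v s) (f : ℝ[X])
    (hdeg : f.degree < s.card) :
    f.coeff (s.card - 1) = ∑ i ∈ s, f.eval (v i) * ∏ j ∈ s.erase i, (v i - v j)⁻¹ := by
  conv_lhs => rw [Lagrange.eq_interpolate hvs hdeg]
  rw [Lagrange.interpolate_apply, finset_sum_coeff]
  exact sum_congr rfl fun i hi => by rw [coeff_C_mul, coeff_lagrange_basis s v hvs hi]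

/-- if `L = l₀ + ⋯ + lₙ = n` then `Φₙ(l₀,…,lₙ; y₁,…,yₙ)` for
every admissible tuple `(y₁,…,yₙ)`. -/
theorem Phi_eq_one_of_sum_eq (n : ℕ) (hn : 1 ≤ n) (l : ℕ → ℕ) (y : ℕ → ℝ)
    (hL : ∑ r ∈ Finset.range (n + 1), l r = n)
    (hy : Admissible n y) :
    Phi n l y = 1 := by
  classical
  set x : ℕ → ℝ := fun k => S y 1 k with hxdef
  -- partial sums split
  have hsplit : ∀ r m : ℕ, r ≤ m → x r + S y (r + 1) m = x m := by
    intro r m hrm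
    simp only [hxdef, S]
    rw [← Finset.sum_union (by
      rw [Finset.disjoint_left]
      intro t ht ht'
      rw [Finset.mem_Icc] at ht ht'
      omega)]
    apply Finset.sum_congr _ (fun _ _ => rfl)
    ext t
    simp only [Finset.mem_union, Finset.mem_Icc]
    omega
  have hx : ∀ r m : ℕ, r ≤ m → S y (r + 1) m = x m - x r := by
    intro r m hrm
    rw [← hsplit r m hrm]; ring
  have hxne : ∀ r m : ℕ, r < m → m ≤ n → x m - x r ≠ 0 := by
    intro r m h1 h2
    rw [← hx r m h1.le]
    exact hy (r + 1) m (by omega) (by omega) h2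
  have hne : ∀ r m : ℕ, r < m → m ≤ n → x m ≠ x r := fun r m h1 h2 =>
    sub_ne_zero.mp (hxne r m h1 h2)
  have hinj : Set.InjOn x (Finset.range (n + 1) : Set ℕ) := by
    intro a ha b hb hab
    simp only [Finset.coe_range, Set.mem_Iio] at ha hb
    rcases lt_trichotomy a b with h | h | h
    · exact absurd hab.symm (hne a b h (by omega))
    · exact h
    · exact absurd hab (hne b a h (by omega))
  -- the polynomial
  set G : ℝ[X] := ∏ r ∈ Finset.range (n + 1), (C (x r) - X) ^ l r with hGdef
  have hfact : ∀ a : ℝ, (C a - X : ℝ[X]).natDegree = 1 := fun a => by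
    rw [show (C a - X : ℝ[X]) = -(X - C a) by ring, natDegree_neg, natDegree_X_sub_C]
  have hfactlc : ∀ a : ℝ, (C a - X : ℝ[X]).leadingCoeff = -1 := fun a => by
    rw [show (C a - X : ℝ[X]) = -(X - C a) by ring, leadingCoeff_neg,
      (monic_X_sub_C a).leadingCoeff]
  have hfact0 : ∀ a : ℝ, (C a - X : ℝ[X]) ≠ 0 := by
    intro a h
    have := hfact a
    rw [h, natDegree_zero] at this
    exact absurd this (by norm_num)
  have hG0 : G ≠ 0 := prod_ne_zero_iff.mpr fun r _ => pow_ne_zero _ (hfact0 _)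
  have hGdeg : G.natDegree = n := by
    rw [hGdef, natDegree_prod _ _ fun r _ => pow_ne_zero _ (hfact0 _)]
    simp_rw [natDegree_pow, hfact, mul_one]
    exact hL
  have hGlc : G.leadingCoeff = (-1 : ℝ) ^ n := by
    rw [hGdef, leadingCoeff_prod]
    simp_rw [leadingCoeff_pow, hfactlc]
    rw [Finset.prod_pow_eq_pow_sum, hL]
  have hGcoeff : G.coeff n = (-1 : ℝ) ^ n := by
    conv_lhs => rw [← hGdeg]
    rw [coeff_natDegree, hGlc]
  have hdeg : G.degree < ((Finset.range (n + 1)).card : WithBot ℕ) := by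
    rw [Finset.card_range, degree_eq_natDegree hG0, hGdeg]
    exact_mod_cast Nat.lt_succ_self n
  have key : ((-1 : ℝ)) ^ n = ∑ m ∈ Finset.range (n + 1),
      G.eval (x m) * ∏ j ∈ (Finset.range (n + 1)).erase m, (x m - x j)⁻¹ := by
    have h := divided_diff (Finset.range (n + 1)) x hinj G hdeg
    rwa [Finset.card_range, Nat.add_sub_cancel, hGcoeff] at h
  have heval : ∀ m : ℕ, G.eval (x m) = ∏ r ∈ Finset.range (n + 1), (x r - x m) ^ l r := by
    intro m
    simp only [hGdef, eval_prod, eval_pow, eval_sub, eval_C, eval_X]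
  -- term-by-term identification
  have hterm : ∀ m ∈ Finset.range (n + 1),
      (-1 : ℝ) ^ m *
        (∏ r ∈ Finset.range m, (-S y (r + 1) m) ^ l r / S y (r + 1) m) *
        (if l m = 0 then 1 else 0) *
        (∏ r ∈ Finset.Icc (m + 1) n, (S y (m + 1) r) ^ l r / S y (m + 1) r)
      = (-1 : ℝ) ^ n *
        (G.eval (x m) * ∏ j ∈ (Finset.range (n + 1)).erase m, (x m - x j)⁻¹) := by
    intro m hm
    rw [Finset.mem_range] at hm
    have hm' : m ≤ n := by omega
    by_cases hlm : l m = 0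
    · rw [if_pos hlm, mul_one]
      have hA : (∏ r ∈ Finset.range m, (-S y (r + 1) m) ^ l r / S y (r + 1) m)
          = ∏ r ∈ Finset.range m, (x r - x m) ^ l r * (x m - x r)⁻¹ := by
        refine Finset.prod_congr rfl fun r hr => ?_
        rw [hx r m (Finset.mem_range.mp hr).le, neg_sub, div_eq_mul_inv]
      have hB : (∏ r ∈ Finset.Icc (m + 1) n, (S y (m + 1) r) ^ l r / S y (m + 1) r)
          = ∏ r ∈ Finset.Icc (m + 1) n, (x r - x m) ^ l r * (x r - x m)⁻¹ := by
        refine Finset.prod_congr rfl fun r hr => ?_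
        rw [Finset.mem_Icc] at hr
        rw [hx m r (by omega), div_eq_mul_inv]
      have herase : (Finset.range (n + 1)).erase m
          = Finset.range m ∪ Finset.Icc (m + 1) n := by
        ext t
        simp only [Finset.mem_erase, Finset.mem_range, Finset.mem_union, Finset.mem_Icc]
        omega
      have hdisj : Disjoint (Finset.range m) (Finset.Icc (m + 1) n) := by
        rw [Finset.disjoint_left]
        intro t ht ht'
        rw [Finset.mem_range] at ht
        rw [Finset.mem_Icc] at ht'
        omega
      have hEP : G.eval (x m) * ∏ j ∈ (Finset.range (n + 1)).erase m, (x m - x j)⁻¹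
          = (∏ r ∈ Finset.range m, (x r - x m) ^ l r * (x m - x r)⁻¹)
            * ∏ r ∈ Finset.Icc (m + 1) n, (x r - x m) ^ l r * (x m - x r)⁻¹ := by
        rw [heval m, ← Finset.mul_prod_erase _ (fun r => (x r - x m) ^ l r) (Finset.mem_range.mpr hm),
          sub_self, hlm, pow_zero, one_mul, ← Finset.prod_mul_distrib, herase,
          Finset.prod_union hdisj]
      have hcard : (Finset.Icc (m + 1) n).card = n - m := by
        rw [Nat.card_Icc]; omega
      have hflip : (∏ r ∈ Finset.Icc (m + 1) n, (x r - x m) ^ l r * (x m - x r)⁻¹)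
          = (-1 : ℝ) ^ (n - m)
            * ∏ r ∈ Finset.Icc (m + 1) n, (x r - x m) ^ l r * (x r - x m)⁻¹ := by
        rw [← hcard, ← Finset.prod_const, ← Finset.prod_mul_distrib]
        refine Finset.prod_congr rfl fun r hr => ?_
        rw [show x m - x r = -(x r - x m) by ring, inv_neg]
        ring
      have hsgn : (-1 : ℝ) ^ n * (-1 : ℝ) ^ (n - m) = (-1 : ℝ) ^ m := by
        rw [← pow_add, show n + (n - m) = m + 2 * (n - m) by omega, pow_add, pow_mul,
          neg_one_sq, one_pow, mul_one]
      rw [hA, hB, hEP, hflip, ← hsgn]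
      ring
    · rw [if_neg hlm]
      have h0 : G.eval (x m) = 0 := by
        rw [heval m]
        exact Finset.prod_eq_zero (Finset.mem_range.mpr hm)
          (by rw [sub_self, zero_pow hlm])
      rw [h0]
      ring
  rw [Phi, Finset.sum_congr rfl hterm, ← Finset.mul_sum, ← key, ← pow_add, ← two_mul,
    pow_mul, neg_one_sq, one_pow]
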